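/- Let Γ ≠ {±1} be a discrete subgroup of SL(2,ℝ) in which the only elements fixing ∞ are ±1, containing no parabolic element, such that the radii of the isometric spheres I(g), g ∈ Γ \ {±1}, are bounded above, the family {int I(g) : g ∈ Γ \ {±1}} is locally finite in ℍ, and only finitely many isometric spheres of Γ are relevant. Let α be the largest and β the smallest real number with ∂K ⊆ {z ∈ ℍ : α ≤ Re z ≤ β}, and suppose there is g ∈ Γ \ {±1} such that I₁ = I(g) and I₂ = I(g⁻¹) are relevant, α is an endpoint of the interval under I₁ (i.e., α equals the center of I₁ minus its radius) and β is an endpoint of the interval under I₂ (i.e., β equals the center of I₂ plus its radius). Then either Γ is generated by g and −1, or there exists h ∈ Γ \ {±1} such that I₃ = I(h) is relevant, I₃ ∉ {I₁, I₂}, the summit s(I₃) lies in ∂K, and Re s(I₁) < Re s(I₃) < Re s(I₂). -/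

import Mathlib

open Complex Matrix Filter

noncomputable section

abbrev SL2R := Matrix.SpecialLinearGroup (Fin 2) ℝ

/-- The upper half-plane, as a subset of `ℂ`. -/
def UH : Set ℂ := {z : ℂ | 0 < z.im}

/-- Möbius action of `SL(2,ℝ)` on `ℂ`. -/
def moeb (g : SL2R) (z : ℂ) : ℂ :=
  ((g 0 0 : ℂ) * z + (g 0 1 : ℂ)) / ((g 1 0 : ℂ) * z + (g 1 1 : ℂ))

/-- The isometric sphere of `g` (requires `g 1 0 ≠ 0` to be meaningful). -/
def isoSphere (g : SL2R) : Set ℂ :=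
  {z ∈ UH | ‖(g 1 0 : ℂ) * z + (g 1 1 : ℂ)‖ = 1}

/-- The interior of the isometric sphere of `g`. -/
def isoInt (g : SL2R) : Set ℂ :=
  {z ∈ UH | ‖(g 1 0 : ℂ) * z + (g 1 1 : ℂ)‖ < 1}

/-- The exterior of the isometric sphere of `g`. -/
def isoExt (g : SL2R) : Set ℂ :=
  {z ∈ UH | 1 < ‖(g 1 0 : ℂ) * z + (g 1 1 : ℂ)‖}

/-- `g = 1` or `g = -1` (stated at the matrix level). -/
def IsPMOne (g : SL2R) : Prop :=
  (g : Matrix (Fin 2) (Fin 2) ℝ) = 1 ∨ (g : Matrix (Fin 2) (Fin 2) ℝ) = -1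

/-- Discreteness of a subgroup of `SL(2,ℝ)`: every element is isolated
(entrywise, which is equivalent to discreteness in the matrix topology). -/
def IsDiscreteSubgroup (Γ : Subgroup SL2R) : Prop :=
  ∀ g ∈ Γ, ∃ ε > (0 : ℝ), ∀ h ∈ Γ,
    (∀ i j, |(h : Matrix (Fin 2) (Fin 2) ℝ) i j - (g : Matrix (Fin 2) (Fin 2) ℝ) i j| < ε) → h = g

/-- The parabolic translation `t_λ = [[1,λ],[0,1]]` as an element of `SL(2,ℝ)`. -/
def tMat (l : ℝ) : SL2R := ⟨!![1, l; 0, 1], by norm_num [Matrix.det_fin_two_of]⟩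

/-- The common exterior `K` of all isometric spheres of `Γ`. -/
def commonExt (Γ : Subgroup SL2R) : Set ℂ :=
  ⋂ g ∈ {g : SL2R | g ∈ Γ ∧ ¬ IsPMOne g}, isoExt g

/-- An isometric sphere is relevant if it meets the frontier (in `ℍ`) of the
common exterior in more than one point. -/
def IsRelevant (Γ : Subgroup SL2R) (g : SL2R) : Prop :=
  (isoSphere g ∩ (frontier (commonExt Γ) ∩ UH)).Nontrivial

/-- The summit `-d/c + i/|c|` of the isometric sphere of `g`. -/
def summit (g : SL2R) : ℂ :=
  ((-(g 1 1) / g 1 0 : ℝ) : ℂ) + ((1 / |g 1 0| : ℝ) : ℂ) * Complex.I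

/-! ### auxiliary definitions -/

/-- center of the isometric sphere -/
def cen (h : SL2R) : ℝ := -(h 1 1) / (h 1 0)

/-- radius of the isometric sphere -/
def rad (h : SL2R) : ℝ := 1 / |h 1 0|

lemma rad_pos (h : SL2R) (hc : h 1 0 ≠ 0) : 0 < rad h := by
  have : 0 < |h 1 0| := abs_pos.mpr hc
  exact one_div_pos.mpr this

lemma inv_10 (g : SL2R) : (g⁻¹) 1 0 = -(g 1 0) := by
  rw [Matrix.SpecialLinearGroup.SL2_inv_expl]; simp

lemma inv_11 (g : SL2R) : (g⁻¹) 1 1 = g 0 0 := by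
  rw [Matrix.SpecialLinearGroup.SL2_inv_expl]; simp

lemma inv_00 (g : SL2R) : (g⁻¹) 0 0 = g 1 1 := by
  rw [Matrix.SpecialLinearGroup.SL2_inv_expl]; simp

lemma inv_01 (g : SL2R) : (g⁻¹) 0 1 = -(g 0 1) := by
  rw [Matrix.SpecialLinearGroup.SL2_inv_expl]; simp

lemma mul_entry (u v : SL2R) (i j : Fin 2) :
    (u*v) i j = u i 0 * v 0 j + u i 1 * v 1 j := by
  simp [Matrix.SpecialLinearGroup.coe_mul, Matrix.mul_apply, Fin.sum_univ_two]

lemma det_entry (g : SL2R) : g 0 0 * g 1 1 - g 0 1 * g 1 0 = 1 := by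
  have := g.prop
  rwa [Matrix.det_fin_two] at this

lemma rad_inv (g : SL2R) : rad g⁻¹ = rad g := by
  unfold rad; rw [inv_10, abs_neg]

lemma cen_inv (g : SL2R) : cen g⁻¹ = g 0 0 / g 1 0 := by
  unfold cen; rw [inv_10, inv_11]; rw [neg_div, div_neg, neg_neg]

/-- |c z + d| = |c| * |z - cen| -/
lemma abs_lin (h : SL2R) (hc : h 1 0 ≠ 0) (z : ℂ) :
    ‖(h 1 0 : ℂ) * z + (h 1 1 : ℂ)‖ = |h 1 0| * ‖z - (cen h : ℂ)‖ := by
  have hcc : (h 1 0 : ℂ) ≠ 0 := by exact_mod_cast hc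
  have : (h 1 0 : ℂ) * z + (h 1 1 : ℂ) = (h 1 0 : ℂ) * (z - ((cen h : ℝ) : ℂ)) := by
    unfold cen; push_cast; field_simp; ring
  rw [this, norm_mul, Complex.norm_real, Real.norm_eq_abs]

lemma mem_isoInt (h : SL2R) (hc : h 1 0 ≠ 0) (z : ℂ) :
    z ∈ isoInt h ↔ 0 < z.im ∧ ‖z - (cen h : ℂ)‖ < rad h := by
  unfold isoInt rad
  rw [Set.mem_sep_iff, abs_lin h hc]
  have hpos : 0 < |h 1 0| := abs_pos.mpr hc
  constructor
  · rintro ⟨h1, h2⟩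
    exact ⟨h1, by rwa [lt_div_iff₀ hpos, mul_comm]⟩
  · rintro ⟨h1, h2⟩
    exact ⟨h1, by rwa [lt_div_iff₀ hpos, mul_comm] at h2⟩

lemma mem_isoExt (h : SL2R) (hc : h 1 0 ≠ 0) (z : ℂ) :
    z ∈ isoExt h ↔ 0 < z.im ∧ rad h < ‖z - (cen h : ℂ)‖ := by
  unfold isoExt rad
  rw [Set.mem_sep_iff, abs_lin h hc]
  have hpos : 0 < |h 1 0| := abs_pos.mpr hc
  constructor
  · rintro ⟨h1, h2⟩
    exact ⟨h1, by rwa [div_lt_iff₀ hpos, mul_comm]⟩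
  · rintro ⟨h1, h2⟩
    exact ⟨h1, by rwa [div_lt_iff₀ hpos, mul_comm] at h2⟩

lemma mem_isoSphere (h : SL2R) (hc : h 1 0 ≠ 0) (z : ℂ) :
    z ∈ isoSphere h ↔ 0 < z.im ∧ ‖z - (cen h : ℂ)‖ = rad h := by
  unfold isoSphere rad
  rw [Set.mem_sep_iff, abs_lin h hc]
  have hpos : 0 < |h 1 0| := abs_pos.mpr hc
  have hne : |h 1 0| ≠ 0 := ne_of_gt hpos
  constructor
  · rintro ⟨h1, h2⟩
    exact ⟨h1, by rw [eq_div_iff hne, mul_comm]; exact h2⟩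
  · rintro ⟨h1, h2⟩
    refine ⟨h1, ?_⟩
    rw [eq_div_iff hne, mul_comm] at h2
    exact h2

lemma summit_re (h : SL2R) : (summit h).re = cen h := by
  unfold summit cen; simp

lemma summit_im (h : SL2R) : (summit h).im = rad h := by
  unfold summit rad
  simp [Complex.add_im, Complex.mul_im]
  rw [← abs_mul_self (h 1 0)]
  rcases eq_or_ne (|h 1 0|) 0 with h0 | h0
  · simp [h0]
  · have : h 1 0 ≠ 0 := fun hh => h0 (by simp [hh])
    field_simp
    exact (abs_pow _ 2).symm

lemma summit_eq (h : SL2R) : summit h = ((cen h : ℝ) : ℂ) + ((rad h : ℝ) : ℂ) * Complex.I := rfl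

lemma mem_commonExt (Γ : Subgroup SL2R) (z : ℂ) :
    z ∈ commonExt Γ ↔ ∀ u ∈ Γ, ¬ IsPMOne u → z ∈ isoExt u := by
  unfold commonExt
  rw [Set.mem_iInter₂]
  constructor
  · intro H u hu hpm; exact H u ⟨hu, hpm⟩
  · intro H u hu; exact H u hu.1 hu.2
/-! ### topology helpers -/

section Topo

variable (Γ : Subgroup SL2R)

lemma abs_ge_im (w : ℂ) : |w.im| ≤ ‖w‖ := Complex.abs_im_le_norm w

/-- points with large imaginary part are in the common exterior -/
lemma high_mem_commonExt
    (hstab : ∀ u ∈ Γ, u 1 0 = 0 → IsPMOne u)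
    (R : ℝ) (hrad : ∀ u ∈ Γ, ¬ IsPMOne u → 1 / |u 1 0| ≤ R)
    (z : ℂ) (him : 0 < z.im) (hbig : R < z.im) : z ∈ commonExt Γ := by
  rw [mem_commonExt]
  intro u hu hpm
  have hc : u 1 0 ≠ 0 := fun h0 => hpm (hstab u hu h0)
  rw [mem_isoExt u hc]
  refine ⟨him, ?_⟩
  have h1 : rad u ≤ R := hrad u hu hpm
  have h2 : (z - (cen u : ℂ)).im = z.im := by simp
  calc rad u ≤ R := h1
    _ < z.im := hbig
    _ ≤ |(z - (cen u : ℂ)).im| := by rw [h2]; exact le_abs_self _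
    _ ≤ ‖z - (cen u : ℂ)‖ := abs_ge_im _

/-- square of abs in terms of re and im -/
lemma absq (w : ℂ) : (‖w‖)^2 = w.re^2 + w.im^2 := by
  rw [Complex.sq_norm, Complex.normSq_apply]; ring

lemma abs_lt_abs_add_I (w : ℂ) (δ : ℝ) (h0 : 0 ≤ w.im) (hδ : 0 < δ) :
    ‖w‖ < ‖w + (δ : ℂ) * Complex.I‖ := by
  have h1 : (‖w‖)^2 < (‖w + (δ:ℂ) * Complex.I‖)^2 := by
    rw [absq, absq]
    simp only [Complex.add_re, Complex.add_im, Complex.mul_re, Complex.mul_im,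
      Complex.I_re, Complex.I_im, Complex.ofReal_re, Complex.ofReal_im]
    nlinarith
  exact lt_of_pow_lt_pow_left₀ 2 (norm_nonneg _) h1

/-- if z (in UH) is outside or on every sphere, it is in the closure of K -/
lemma mem_closure_commonExt
    (hstab : ∀ u ∈ Γ, u 1 0 = 0 → IsPMOne u)
    (z : ℂ) (him : 0 < z.im)
    (hout : ∀ u ∈ Γ, ¬ IsPMOne u → rad u ≤ ‖z - (cen u : ℂ)‖) :
    z ∈ closure (commonExt Γ) := by
  rw [Metric.mem_closure_iff]
  intro ε hε
  refine ⟨z + ((ε/2 : ℝ) : ℂ) * Complex.I, ?_, ?_⟩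
  · rw [mem_commonExt]
    intro u hu hpm
    have hc : u 1 0 ≠ 0 := fun h0 => hpm (hstab u hu h0)
    rw [mem_isoExt u hc]
    constructor
    · simp [him]; linarith
    · calc rad u ≤ ‖z - (cen u : ℂ)‖ := hout u hu hpm
        _ < ‖(z - (cen u : ℂ)) + ((ε/2:ℝ):ℂ) * Complex.I‖ := by
            apply abs_lt_abs_add_I _ _ (by simp; linarith) (by linarith)
        _ = ‖(z + ((ε/2:ℝ):ℂ) * Complex.I) - (cen u : ℂ)‖ := by ring_nf
  · rw [Complex.dist_eq]
    have : z - (z + ((ε/2:ℝ):ℂ) * Complex.I) = -(((ε/2:ℝ):ℂ) * Complex.I) := by ring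
    rw [this, norm_neg, norm_mul, Complex.norm_real, Real.norm_eq_abs, Complex.norm_I]
    rw [abs_of_pos (by linarith : (0:ℝ) < ε/2)]
    linarith

lemma mem_frontier_of (s : Set ℂ) (z : ℂ) (h1 : z ∈ closure s) (h2 : z ∉ s) :
    z ∈ frontier s := by
  rw [frontier]
  exact ⟨h1, fun hin => h2 (interior_subset hin)⟩

/-- crossing lemma: a vertical segment from outside s to inside s meets the frontier -/
lemma cross_frontier (s : Set ℂ) (f : ℝ → ℂ) (hf : Continuous f) (a b : ℝ) (hab : a ≤ b)
    (ha : f a ∉ s) (hb : f b ∈ s) :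
    ∃ t ∈ Set.Icc a b, f t ∈ frontier s := by
  set T := {t ∈ Set.Icc a b | f t ∉ s} with hT
  have haT : a ∈ T := ⟨⟨le_refl a, hab⟩, ha⟩
  have hTne : T.Nonempty := ⟨a, haT⟩
  have hbdd : BddAbove T := ⟨b, fun t ht => ht.1.2⟩
  set t₀ := sSup T with ht₀
  have ht₀mem : t₀ ∈ Set.Icc a b := ⟨le_csSup hbdd haT, csSup_le hTne (fun t ht => ht.1.2)⟩
  refine ⟨t₀, ht₀mem, ?_⟩
  rw [frontier_eq_closure_inter_closure]
  constructor
  · -- f t₀ ∈ closure s : approach from the right (or t₀ = b)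
    rcases eq_or_lt_of_le ht₀mem.2 with heq | hlt
    · rw [heq]; exact subset_closure hb
    · have : ∀ n : ℕ, f (t₀ + (b - t₀)/(n+1)) ∈ s := by
        intro n
        have hpos : 0 < (b - t₀)/(n+1) := div_pos (by linarith) (by positivity)
        have hle : (b - t₀)/(n+1) ≤ b - t₀ := by
          apply div_le_self (by linarith) (by push_cast; linarith)
        by_contra hns
        have : t₀ + (b - t₀)/(n+1) ∈ T :=
          ⟨⟨by linarith [ht₀mem.1], by linarith⟩, hns⟩
        have := le_csSup hbdd this
        linarith
      have htend : Tendsto (fun n : ℕ => t₀ + (b - t₀)/(n+1)) atTop (nhds t₀) := by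
        have : Tendsto (fun n : ℕ => (b - t₀)/(n+1)) atTop (nhds 0) := by
          apply Tendsto.div_atTop tendsto_const_nhds
          exact tendsto_atTop_add_const_right atTop 1 tendsto_natCast_atTop_atTop
        simpa using tendsto_const_nhds.add this
      have : Tendsto (fun n : ℕ => f (t₀ + (b - t₀)/(n+1))) atTop (nhds (f t₀)) :=
        (hf.tendsto t₀).comp htend
      exact mem_closure_of_tendsto this (Filter.Eventually.of_forall ‹∀ n : ℕ, f (t₀ + (b - t₀)/(n+1)) ∈ s›)
  · -- f t₀ ∈ closure sᶜ
    have h1 : t₀ ∈ closure T := csSup_mem_closure hTne hbdd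
    have h2 : f t₀ ∈ closure (f '' T) := by
      exact image_closure_subset_closure_image hf ⟨t₀, h1, rfl⟩
    apply closure_mono _ h2
    rintro w ⟨t, ht, rfl⟩
    exact ht.2

end Topo
/-! ### Claim A : every isometric sphere lies over [α, β] -/

section ClaimA

variable (Γ : Subgroup SL2R)

lemma vert_cont (x : ℝ) : Continuous (fun t : ℝ => (x:ℂ) + (t:ℂ) * Complex.I) :=
  continuous_const.add (Complex.continuous_ofReal.mul continuous_const)

lemma interval_subset
    (hstab : ∀ u ∈ Γ, u 1 0 = 0 → IsPMOne u)
    (R : ℝ) (hrad : ∀ u ∈ Γ, ¬ IsPMOne u → 1 / |u 1 0| ≤ R)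
    (α β : ℝ)
    (hα : ∀ z ∈ frontier (commonExt Γ) ∩ UH, α ≤ z.re)
    (hβ : ∀ z ∈ frontier (commonExt Γ) ∩ UH, z.re ≤ β)
    (h : SL2R) (hh : h ∈ Γ) (hpm : ¬ IsPMOne h) :
    α ≤ cen h - rad h ∧ cen h + rad h ≤ β := by
  have hc : h 1 0 ≠ 0 := fun h0 => hpm (hstab h hh h0)
  have hr : 0 < rad h := rad_pos h hc
  have hR : rad h ≤ R := hrad h hh hpm
  -- a helper producing a frontier point above a given abscissa inside the sphere
  have key : ∀ x : ℝ, |x - cen h| < rad h → (α ≤ x ∧ x ≤ β) := by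
    intro x hx
    have hsq : (x - cen h)^2 < (rad h)^2 := by
      have := abs_lt.mp hx
      nlinarith
    set s := (rad h)^2 - (x - cen h)^2 with hs
    have hspos : 0 < s := by simp [hs]; nlinarith
    set ε := min 1 (Real.sqrt s / 2) with hε
    have hεpos : 0 < ε := lt_min one_pos (by positivity)
    have hε1 : ε ≤ 1 := min_le_left _ _
    set M := max R 1 + 1 with hM
    have hMR : R < M := by
      have : R ≤ max R 1 := le_max_left _ _
      linarith
    have hεM : ε ≤ M := by
      have : (1:ℝ) ≤ max R 1 := le_max_right _ _
      linarith
    set f := fun t : ℝ => (x:ℂ) + (t:ℂ) * Complex.I with hf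
    have him : ∀ t, (f t).im = t := by intro t; simp [hf]
    have hre : ∀ t, (f t).re = x := by intro t; simp [hf]
    have hfa : f ε ∉ commonExt Γ := by
      intro hmem
      have h1 : f ε ∈ isoExt h := (mem_commonExt Γ (f ε)).mp hmem h hh hpm
      rw [mem_isoExt h hc] at h1
      have h2 : (‖f ε - (cen h : ℂ)‖)^2 = (x - cen h)^2 + ε^2 := by
        rw [absq]
        congr 1
        · congr 1; simp [hf]
        · congr 1; simp [hf]
      have hε2 : ε^2 < s := by
        have h3 : ε ≤ Real.sqrt s / 2 := min_le_right _ _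
        have h4 : ε^2 ≤ (Real.sqrt s / 2)^2 := by nlinarith
        have h5 : (Real.sqrt s / 2)^2 = s / 4 := by
          rw [div_pow, Real.sq_sqrt hspos.le]; norm_num
        nlinarith
      have h6 : (‖f ε - (cen h : ℂ)‖)^2 < (rad h)^2 := by
        rw [h2]; simp only [hs] at hε2 ⊢; nlinarith
      have h7 : ‖f ε - (cen h : ℂ)‖ < rad h :=
        lt_of_pow_lt_pow_left₀ 2 hr.le h6
      linarith [h1.2]
    have hfb : f M ∈ commonExt Γ := by
      apply high_mem_commonExt Γ hstab R hrad
      · rw [him]; linarith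
      · rw [him]; exact hMR
    obtain ⟨t, ht, hfront⟩ := cross_frontier (commonExt Γ) f (vert_cont x) ε M hεM hfa hfb
    have hUH : f t ∈ UH := by
      show 0 < (f t).im
      rw [him]; linarith [ht.1]
    constructor
    · have := hα (f t) ⟨hfront, hUH⟩; rwa [hre] at this
    · have := hβ (f t) ⟨hfront, hUH⟩; rwa [hre] at this
  constructor
  · by_contra hcon
    push_neg at hcon
    set x := (cen h - rad h + min α (cen h + rad h))/2 with hx
    have h1 : cen h - rad h < min α (cen h + rad h) := lt_min hcon (by linarith)
    have h2 : cen h - rad h < x := by simp only [hx]; linarith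
    have h3 : x < α := by
      have := min_le_left α (cen h + rad h); simp only [hx]; linarith
    have h4 : x < cen h + rad h := by
      have := min_le_right α (cen h + rad h); simp only [hx]; linarith
    have : α ≤ x := (key x (abs_lt.mpr ⟨by linarith, by linarith⟩)).1
    linarith
  · by_contra hcon
    push_neg at hcon
    set x := (max β (cen h - rad h) + (cen h + rad h))/2 with hx
    have h1 : max β (cen h - rad h) < cen h + rad h := max_lt hcon (by linarith)
    have h2 : x < cen h + rad h := by simp only [hx]; linarith
    have h3 : β < x := by
      have := le_max_left β (cen h - rad h); simp only [hx]; linarith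
    have h4 : cen h - rad h < x := by
      have := le_max_right β (cen h - rad h); simp only [hx]; linarith
    have : x ≤ β := (key x (abs_lt.mpr ⟨by linarith, by linarith⟩)).2
    linarith

end ClaimA
/-! ### finiteness of sets of elements with radius bounded below -/

section Finiteness

variable (Γ : Subgroup SL2R)

lemma not_IsPMOne_inv (h : SL2R) (hpm : ¬ IsPMOne h) : ¬ IsPMOne h⁻¹ := by
  intro hcon
  apply hpm
  rcases hcon with h1 | h1
  · left
    have : h⁻¹ = 1 := Subtype.ext (by rw [h1]; rfl)
    have : h = 1 := by rwa [inv_eq_one] at this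
    rw [this]; simp
  · right
    have hmul : ((h⁻¹ * h : SL2R) : Matrix (Fin 2) (Fin 2) ℝ) = 1 := by
      rw [inv_mul_cancel]; simp
    rw [Matrix.SpecialLinearGroup.coe_mul, h1, neg_one_mul, neg_eq_iff_eq_neg] at hmul
    exact hmul

lemma exists_conv_subseq (x : ℕ → ℝ) (C : ℝ) (hx : ∀ n, |x n| ≤ C) :
    ∃ (l : ℝ) (φ : ℕ → ℕ), StrictMono φ ∧ Tendsto (x ∘ φ) atTop (nhds l) := by
  have hmem : ∀ n, x n ∈ Set.Icc (-C) C := fun n => by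
    have := abs_le.mp (hx n); exact ⟨this.1, this.2⟩
  obtain ⟨l, _, φ, hφ, hconv⟩ := (isCompact_Icc).tendsto_subseq hmem
  exact ⟨l, φ, hφ, hconv⟩

lemma finite_large_radius
    (hdisc : IsDiscreteSubgroup Γ)
    (hstab : ∀ u ∈ Γ, u 1 0 = 0 → IsPMOne u)
    (R : ℝ) (hrad : ∀ u ∈ Γ, ¬ IsPMOne u → 1 / |u 1 0| ≤ R)
    (α β : ℝ)
    (hα : ∀ z ∈ frontier (commonExt Γ) ∩ UH, α ≤ z.re)
    (hβ : ∀ z ∈ frontier (commonExt Γ) ∩ UH, z.re ≤ β)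
    (ρ₀ : ℝ) (hρ : 0 < ρ₀) :
    {h : SL2R | h ∈ Γ ∧ ¬ IsPMOne h ∧ ρ₀ ≤ rad h}.Finite := by
  set S := {h : SL2R | h ∈ Γ ∧ ¬ IsPMOne h ∧ ρ₀ ≤ rad h} with hS
  by_contra hfin
  have hinf : S.Infinite := hfin
  -- entrywise bounds
  set M0 := max |α| |β| with hM0
  set C : ℝ := max (1/ρ₀) (max (M0/ρ₀) ((M0/ρ₀ * (M0/ρ₀) + 1) * R)) with hC
  have hbound : ∀ h ∈ S, ∀ i j, |h i j| ≤ C := by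
    rintro h ⟨hh, hpm, hρh⟩ i j
    have hc : h 1 0 ≠ 0 := fun h0 => hpm (hstab h hh h0)
    have hcabs : 0 < |h 1 0| := abs_pos.mpr hc
    have hrpos : 0 < rad h := rad_pos h hc
    have hcle : |h 1 0| ≤ 1/ρ₀ := by
      have h2 : ρ₀ ≤ 1/|h 1 0| := hρh
      rw [le_div_iff₀ hcabs] at h2
      rw [le_div_iff₀ hρ]
      nlinarith
    have hRh : rad h ≤ R := hrad h hh hpm
    have hAB := interval_subset Γ hstab R hrad α β hα hβ h hh hpm
    have hcen : |cen h| ≤ M0 := by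
      have h1 : α ≤ cen h := by linarith [hAB.1]
      have h2 : cen h ≤ β := by linarith [hAB.2]
      rw [abs_le]
      constructor
      · have : -|α| ≤ α := neg_abs_le α
        have : -M0 ≤ -|α| := by simp [hM0]
        linarith
      · have : β ≤ |β| := le_abs_self β
        have : |β| ≤ M0 := le_max_right _ _
        linarith
    have hd : |h 1 1| ≤ M0/ρ₀ := by
      have : h 1 1 = -(cen h) * h 1 0 := by
        unfold cen; field_simp
      rw [this, abs_mul, abs_neg]
      calc |cen h| * |h 1 0| ≤ M0 * (1/ρ₀) := by
            apply mul_le_mul hcen hcle hcabs.le (le_trans (abs_nonneg _) hcen)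
        _ = M0/ρ₀ := by ring
    have hinv : h⁻¹ ∈ Γ := inv_mem hh
    have hpminv : ¬ IsPMOne h⁻¹ := not_IsPMOne_inv h hpm
    have hABi := interval_subset Γ hstab R hrad α β hα hβ h⁻¹ hinv hpminv
    have hrinv : 0 < rad h⁻¹ := by rw [rad_inv]; exact hrpos
    have hceninv : |cen h⁻¹| ≤ M0 := by
      have h1 : α ≤ cen h⁻¹ := by linarith [hABi.1]
      have h2 : cen h⁻¹ ≤ β := by linarith [hABi.2]
      rw [abs_le]
      constructor
      · have h3 : -|α| ≤ α := neg_abs_le α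
        have h4 : -M0 ≤ -|α| := by simp [hM0]
        linarith
      · have h3 : β ≤ |β| := le_abs_self β
        have h4 : |β| ≤ M0 := le_max_right _ _
        linarith
    have ha : |h 0 0| ≤ M0/ρ₀ := by
      have : h 0 0 = cen h⁻¹ * h 1 0 := by
        rw [cen_inv]; field_simp
      rw [this, abs_mul]
      calc |cen h⁻¹| * |h 1 0| ≤ M0 * (1/ρ₀) := by
            apply mul_le_mul hceninv hcle hcabs.le (le_trans (abs_nonneg _) hceninv)
        _ = M0/ρ₀ := by ring
    have hb : |h 0 1| ≤ (M0/ρ₀ * (M0/ρ₀) + 1) * R := by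
      have hdet := det_entry h
      have : h 0 1 = (h 0 0 * h 1 1 - 1) / h 1 0 := by
        field_simp; linarith [hdet]
      rw [this, abs_div]
      have h1 : |h 0 0 * h 1 1 - 1| ≤ M0/ρ₀ * (M0/ρ₀) + 1 := by
        calc |h 0 0 * h 1 1 - 1| ≤ |h 0 0 * h 1 1| + 1 := by
              have := abs_sub_abs_le_abs_sub (h 0 0 * h 1 1) 1
              have := abs_sub (h 0 0 * h 1 1) 1
              calc |h 0 0 * h 1 1 - 1| ≤ |h 0 0 * h 1 1| + |(1:ℝ)| := abs_sub _ _
                _ = |h 0 0 * h 1 1| + 1 := by norm_num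
          _ ≤ M0/ρ₀ * (M0/ρ₀) + 1 := by
              rw [abs_mul]
              have := mul_le_mul ha hd (abs_nonneg _) (by positivity)
              linarith
      calc |h 0 0 * h 1 1 - 1| / |h 1 0| = |h 0 0 * h 1 1 - 1| * rad h := by
            unfold rad; ring
        _ ≤ (M0/ρ₀ * (M0/ρ₀) + 1) * R := by
            apply mul_le_mul h1 hRh hrpos.le (by positivity)
    -- now case on i j
    fin_cases i <;> fin_cases j
    · exact le_trans ha (le_trans (le_max_left _ _) (le_max_right _ _))
    · exact le_trans hb (le_trans (le_max_right _ _) (le_max_right _ _))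
    · exact le_trans hcle (le_max_left _ _)
    · exact le_trans hd (le_trans (le_max_left _ _) (le_max_right _ _))
  -- extract convergent subsequences of entries
  set u : ℕ → SL2R := fun n => ((Set.Infinite.natEmbedding S hinf) n).1 with hu
  have humem : ∀ n, u n ∈ S := fun n => ((Set.Infinite.natEmbedding S hinf) n).2
  have huinj : Function.Injective u := by
    intro m n hmn
    exact (Set.Infinite.natEmbedding S hinf).injective (Subtype.ext hmn)
  obtain ⟨A, φ1, hφ1, hA⟩ := exists_conv_subseq (fun n => (u n) 0 0) C
    (fun n => hbound _ (humem n) 0 0)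
  obtain ⟨B, φ2, hφ2, hB⟩ := exists_conv_subseq (fun n => (u (φ1 n)) 0 1) C
    (fun n => hbound _ (humem _) 0 1)
  obtain ⟨Cl, φ3, hφ3, hCl⟩ := exists_conv_subseq (fun n => (u (φ1 (φ2 n))) 1 0) C
    (fun n => hbound _ (humem _) 1 0)
  obtain ⟨D, φ4, hφ4, hD⟩ := exists_conv_subseq (fun n => (u (φ1 (φ2 (φ3 n)))) 1 1) C
    (fun n => hbound _ (humem _) 1 1)
  set ψ : ℕ → ℕ := fun n => φ1 (φ2 (φ3 (φ4 n))) with hψ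
  have hψmono : StrictMono ψ := hφ1.comp (hφ2.comp (hφ3.comp hφ4))
  have hta : Tendsto (fun n => (u (ψ n)) 0 0) atTop (nhds A) :=
    hA.comp ((hφ2.comp (hφ3.comp hφ4)).tendsto_atTop)
  have htb : Tendsto (fun n => (u (ψ n)) 0 1) atTop (nhds B) :=
    hB.comp ((hφ3.comp hφ4).tendsto_atTop)
  have htc : Tendsto (fun n => (u (ψ n)) 1 0) atTop (nhds Cl) :=
    hCl.comp (hφ4.tendsto_atTop)
  have htd : Tendsto (fun n => (u (ψ n)) 1 1) atTop (nhds D) :=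
    hD.comp (tendsto_id)
  -- shifted versions
  have hta' : Tendsto (fun n => (u (ψ (n+1))) 0 0) atTop (nhds A) :=
    hta.comp (tendsto_add_atTop_nat 1)
  have htb' : Tendsto (fun n => (u (ψ (n+1))) 0 1) atTop (nhds B) :=
    htb.comp (tendsto_add_atTop_nat 1)
  have htc' : Tendsto (fun n => (u (ψ (n+1))) 1 0) atTop (nhds Cl) :=
    htc.comp (tendsto_add_atTop_nat 1)
  have htd' : Tendsto (fun n => (u (ψ (n+1))) 1 1) atTop (nhds D) :=
    htd.comp (tendsto_add_atTop_nat 1)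
  -- det in the limit
  have hdet : A * D - B * Cl = 1 := by
    have h1 : Tendsto (fun n => (u (ψ n)) 0 0 * (u (ψ n)) 1 1 - (u (ψ n)) 0 1 * (u (ψ n)) 1 0)
        atTop (nhds (A * D - B * Cl)) := ((hta.mul htd).sub (htb.mul htc))
    have h2 : (fun n => (u (ψ n)) 0 0 * (u (ψ n)) 1 1 - (u (ψ n)) 0 1 * (u (ψ n)) 1 0)
        = fun _ => (1:ℝ) := by
      funext n; exact det_entry (u (ψ n))
    rw [h2] at h1
    exact (tendsto_const_nhds_iff.mp h1).symm
  -- the elements e n = u(ψ(n+1)) * (u(ψ n))⁻¹ tend to 1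
  obtain ⟨ε, hε, hiso⟩ := hdisc 1 (one_mem Γ)
  set e : ℕ → SL2R := fun n => u (ψ (n+1)) * (u (ψ n))⁻¹ with he
  have hemem : ∀ n, e n ∈ Γ := fun n =>
    mul_mem (humem (ψ (n+1))).1 (inv_mem (humem (ψ n)).1)
  have hE : ∀ n, ∀ i j, (e n) i j =
      (u (ψ (n+1))) i 0 * ((u (ψ n))⁻¹) 0 j + (u (ψ (n+1))) i 1 * ((u (ψ n))⁻¹) 1 j :=
    fun n i j => mul_entry _ _ i j
  -- entrywise limits of e n
  have hE00 : Tendsto (fun n => (e n) 0 0) atTop (nhds 1) := by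
    have : (fun n => (e n) 0 0) =
        fun n => (u (ψ (n+1))) 0 0 * (u (ψ n)) 1 1 + (u (ψ (n+1))) 0 1 * (-(u (ψ n)) 1 0) := by
      funext n; rw [hE n 0 0, inv_00, inv_10]
    rw [this]
    have := (hta'.mul htd).add (htb'.mul htc.neg)
    have heq : A * D + B * (-Cl) = 1 := by linarith
    rwa [heq] at this
  have hE01 : Tendsto (fun n => (e n) 0 1) atTop (nhds 0) := by
    have : (fun n => (e n) 0 1) =
        fun n => (u (ψ (n+1))) 0 0 * (-(u (ψ n)) 0 1) + (u (ψ (n+1))) 0 1 * ((u (ψ n)) 0 0) := by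
      funext n; rw [hE n 0 1, inv_01, inv_11]
    rw [this]
    have := (hta'.mul htb.neg).add (htb'.mul hta)
    have heq : A * (-B) + B * A = 0 := by ring
    rwa [heq] at this
  have hE10 : Tendsto (fun n => (e n) 1 0) atTop (nhds 0) := by
    have : (fun n => (e n) 1 0) =
        fun n => (u (ψ (n+1))) 1 0 * ((u (ψ n)) 1 1) + (u (ψ (n+1))) 1 1 * (-(u (ψ n)) 1 0) := by
      funext n; rw [hE n 1 0, inv_00, inv_10]
    rw [this]
    have := (htc'.mul htd).add (htd'.mul htc.neg)
    have heq : Cl * D + D * (-Cl) = 0 := by ring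
    rwa [heq] at this
  have hE11 : Tendsto (fun n => (e n) 1 1) atTop (nhds 1) := by
    have : (fun n => (e n) 1 1) =
        fun n => (u (ψ (n+1))) 1 0 * (-(u (ψ n)) 0 1) + (u (ψ (n+1))) 1 1 * ((u (ψ n)) 0 0) := by
      funext n; rw [hE n 1 1, inv_01, inv_11]
    rw [this]
    have := (htc'.mul htb.neg).add (htd'.mul hta)
    have heq : Cl * (-B) + D * A = 1 := by linarith
    rwa [heq] at this
  -- eventually all entries are ε-close to the identity
  have hev00 := (Metric.tendsto_atTop.mp hE00) ε hε
  have hev01 := (Metric.tendsto_atTop.mp hE01) ε hε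
  have hev10 := (Metric.tendsto_atTop.mp hE10) ε hε
  have hev11 := (Metric.tendsto_atTop.mp hE11) ε hε
  obtain ⟨N0, hN0⟩ := hev00
  obtain ⟨N1, hN1⟩ := hev01
  obtain ⟨N2, hN2⟩ := hev10
  obtain ⟨N3, hN3⟩ := hev11
  set N := max (max N0 N1) (max N2 N3) with hN
  have hENT : ∀ i j, |(e N : Matrix (Fin 2) (Fin 2) ℝ) i j - (1 : Matrix (Fin 2) (Fin 2) ℝ) i j| < ε := by
    intro i j
    fin_cases i <;> fin_cases j
    · have := hN0 N (le_trans (le_max_left _ _) (le_max_left _ _))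
      rw [Real.dist_eq] at this
      simpa using this
    · have := hN1 N (le_trans (le_max_right _ _) (le_max_left _ _))
      rw [Real.dist_eq] at this
      simpa using this
    · have := hN2 N (le_trans (le_max_left _ _) (le_max_right _ _))
      rw [Real.dist_eq] at this
      simpa using this
    · have := hN3 N (le_trans (le_max_right _ _) (le_max_right _ _))
      rw [Real.dist_eq] at this
      simpa using this
  have : e N = 1 := hiso (e N) (hemem N) hENT
  have : u (ψ (N+1)) = u (ψ N) := mul_inv_eq_one.mp this
  have : ψ (N+1) = ψ N := huinj this
  have : ψ N < ψ (N+1) := hψmono (Nat.lt_succ_self N)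
  omega

end Finiteness
/-! ### Möbius cocycle and powers -/

section Moebius

lemma denom_ne_zero (v : SL2R) (z : ℂ) (hz : 0 < z.im) :
    ((v 1 0 : ℂ) * z + (v 1 1 : ℂ)) ≠ 0 := by
  intro hcon
  have him : ((v 1 0 : ℂ) * z + (v 1 1 : ℂ)).im = v 1 0 * z.im := by
    simp [Complex.add_im, Complex.mul_im]
  have h10 : v 1 0 = 0 := by
    have := congrArg Complex.im hcon
    rw [him] at this
    simp at this
    rcases this with h | h
    · exact h
    · linarith
  have hre : ((v 1 0 : ℂ) * z + (v 1 1 : ℂ)).re = v 1 0 * z.re + v 1 1 := by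
    simp [Complex.add_re, Complex.mul_re]
  have h11 : v 1 1 = 0 := by
    have := congrArg Complex.re hcon
    rw [hre, h10] at this
    simpa using this
  have := det_entry v
  rw [h10, h11] at this
  simp at this

lemma im_moeb_pos (v : SL2R) (z : ℂ) (hz : 0 < z.im) : 0 < (moeb v z).im := by
  have hD : ((v 1 0 : ℂ) * z + (v 1 1 : ℂ)) ≠ 0 := denom_ne_zero v z hz
  unfold moeb
  rw [Complex.div_im]
  have hnum : ((v 0 0 : ℂ) * z + (v 0 1 : ℂ)).im * ((v 1 0 : ℂ) * z + (v 1 1 : ℂ)).re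
      - ((v 0 0 : ℂ) * z + (v 0 1 : ℂ)).re * ((v 1 0 : ℂ) * z + (v 1 1 : ℂ)).im
      = z.im := by
    simp only [Complex.add_im, Complex.add_re, Complex.mul_im, Complex.mul_re,
      Complex.ofReal_re, Complex.ofReal_im]
    have := det_entry v
    nlinarith [this]
  have hsq : 0 < Complex.normSq ((v 1 0 : ℂ) * z + (v 1 1 : ℂ)) :=
    Complex.normSq_pos.mpr hD
  have : ((v 0 0:ℂ) * z + (v 0 1:ℂ)).im * ((v 1 0:ℂ) * z + (v 1 1:ℂ)).re / Complex.normSq ((v 1 0:ℂ) * z + (v 1 1:ℂ))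
      - ((v 0 0:ℂ) * z + (v 0 1:ℂ)).re * ((v 1 0:ℂ) * z + (v 1 1:ℂ)).im / Complex.normSq ((v 1 0:ℂ) * z + (v 1 1:ℂ))
      = z.im / Complex.normSq ((v 1 0:ℂ) * z + (v 1 1:ℂ)) := by
    rw [div_sub_div_same, hnum]
  rw [this]
  positivity

lemma cocycle (u v : SL2R) (z : ℂ) (hz : 0 < z.im) :
    (((u*v) 1 0 : ℝ) : ℂ) * z + (((u*v) 1 1 : ℝ) : ℂ) =
      ((u 1 0 : ℂ) * (moeb v z) + (u 1 1 : ℂ)) * ((v 1 0 : ℂ) * z + (v 1 1 : ℂ)) := by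
  have hD : ((v 1 0 : ℂ) * z + (v 1 1 : ℂ)) ≠ 0 := denom_ne_zero v z hz
  rw [mul_entry u v 1 0, mul_entry u v 1 1]
  unfold moeb
  push_cast
  field_simp
  ring

lemma cocycle0 (u v : SL2R) (z : ℂ) (hz : 0 < z.im) :
    (((u*v) 0 0 : ℝ) : ℂ) * z + (((u*v) 0 1 : ℝ) : ℂ) =
      ((u 0 0 : ℂ) * (moeb v z) + (u 0 1 : ℂ)) * ((v 1 0 : ℂ) * z + (v 1 1 : ℂ)) := by
  have hD : ((v 1 0 : ℂ) * z + (v 1 1 : ℂ)) ≠ 0 := denom_ne_zero v z hz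
  rw [mul_entry u v 0 0, mul_entry u v 0 1]
  unfold moeb
  push_cast
  field_simp
  ring

lemma moeb_mul (u v : SL2R) (z : ℂ) (hz : 0 < z.im) :
    moeb (u*v) z = moeb u (moeb v z) := by
  have hD : ((v 1 0 : ℂ) * z + (v 1 1 : ℂ)) ≠ 0 := denom_ne_zero v z hz
  have hw : 0 < (moeb v z).im := im_moeb_pos v z hz
  have hD2 : ((u 1 0 : ℂ) * (moeb v z) + (u 1 1 : ℂ)) ≠ 0 := denom_ne_zero u _ hw
  have h0 := cocycle0 u v z hz
  have h1 := cocycle u v z hz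
  show ((((u*v) 0 0 : ℝ)) * z + (((u*v) 0 1 : ℝ))) / ((((u*v) 1 0 : ℝ)) * z + (((u*v) 1 1 : ℝ))) = _
  rw [h0, h1]
  rw [mul_div_mul_right _ _ hD]
  rfl

lemma moeb_one (z : ℂ) : moeb 1 z = z := by
  unfold moeb
  simp

lemma moeb_inv_left (G : SL2R) (z : ℂ) (hz : 0 < z.im) :
    moeb G⁻¹ (moeb G z) = z := by
  rw [← moeb_mul G⁻¹ G z hz, inv_mul_cancel, moeb_one]

lemma backmap (G : SL2R) (hsub : isoInt G ⊆ isoExt G⁻¹) (z : ℂ) (hz : z ∈ isoInt G) :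
    moeb G⁻¹ z ∈ isoInt G := by
  have him : 0 < z.im := hz.1
  have hext : z ∈ isoExt G⁻¹ := hsub hz
  have hE : 1 < ‖((G⁻¹) 1 0 : ℂ) * z + ((G⁻¹) 1 1 : ℂ)‖ := hext.2
  have hco := cocycle G G⁻¹ z him
  rw [mul_inv_cancel] at hco
  have hlhs : (((1:SL2R) 1 0 : ℝ) : ℂ) * z + (((1:SL2R) 1 1 : ℝ) : ℂ) = 1 := by
    norm_num
  rw [hlhs] at hco
  have habs := congrArg norm hco
  rw [norm_mul] at habs
  rw [norm_one] at habs
  have ha : ‖(G 1 0 : ℂ) * (moeb G⁻¹ z) + (G 1 1 : ℂ)‖ < 1 := by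
    have h0 : (0:ℝ) ≤ ‖(G 1 0 : ℂ) * (moeb G⁻¹ z) + (G 1 1 : ℂ)‖ :=
      norm_nonneg _
    nlinarith [habs.symm]
  exact ⟨im_moeb_pos G⁻¹ z him, ha⟩

lemma pow_isoInt_subset (G : SL2R) (hsub : isoInt G ⊆ isoExt G⁻¹) :
    ∀ n : ℕ, isoInt (G^n) ⊆ isoInt G := by
  intro n
  induction n with
  | zero =>
    intro z hz
    exfalso
    have := hz.2
    rw [pow_zero] at this
    norm_num at this
  | succ n ih =>
    intro z hz
    have him : 0 < z.im := hz.1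
    have habs : ‖(((G^n * G) 1 0 : ℝ):ℂ) * z + (((G^n * G) 1 1 : ℝ):ℂ)‖ < 1 := by
      have := hz.2
      rwa [pow_succ] at this
    by_cases hD : ‖(G 1 0 : ℂ) * z + (G 1 1 : ℂ)‖ < 1
    · exact ⟨him, hD⟩
    · push_neg at hD
      have hco := cocycle (G^n) G z him
      rw [hco, norm_mul] at habs
      have ha : ‖((G^n) 1 0 : ℂ) * (moeb G z) + ((G^n) 1 1 : ℂ)‖ < 1 := by
        have h0 : (0:ℝ) ≤ ‖((G^n) 1 0 : ℂ) * (moeb G z) + ((G^n) 1 1 : ℂ)‖ :=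
          norm_nonneg _
        nlinarith
      have hw : moeb G z ∈ isoInt (G^n) := ⟨im_moeb_pos G z him, ha⟩
      have hw2 : moeb G z ∈ isoInt G := ih hw
      have := backmap G hsub _ hw2
      rwa [moeb_inv_left G z him] at this

lemma isoInt_congr_pm (u w : SL2R)
    (h : (u : Matrix (Fin 2) (Fin 2) ℝ) = (w : Matrix (Fin 2) (Fin 2) ℝ) ∨
         (u : Matrix (Fin 2) (Fin 2) ℝ) = -(w : Matrix (Fin 2) (Fin 2) ℝ)) :
    isoInt u = isoInt w := by
  rcases h with h | h
  · rw [Subtype.ext h]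
  · have h10 : u 1 0 = -(w 1 0) := by
      have := congrFun (congrFun h 1) 0
      simpa using this
    have h11 : u 1 1 = -(w 1 1) := by
      have := congrFun (congrFun h 1) 1
      simpa using this
    have key : ∀ z : ℂ, ‖(u 1 0 : ℂ) * z + (u 1 1 : ℂ)‖
        = ‖(w 1 0 : ℂ) * z + (w 1 1 : ℂ)‖ := by
      intro z
      rw [h10, h11]
      have : (((-(w 1 0) : ℝ)) : ℂ) * z + (((-(w 1 1) : ℝ)) : ℂ)
          = -((w 1 0 : ℂ) * z + (w 1 1 : ℂ)) := by push_cast; ring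
      rw [this, norm_neg]
    unfold isoInt
    ext z
    simp [key z]

lemma isoSphere_congr_pm (u w : SL2R)
    (h : (u : Matrix (Fin 2) (Fin 2) ℝ) = (w : Matrix (Fin 2) (Fin 2) ℝ) ∨
         (u : Matrix (Fin 2) (Fin 2) ℝ) = -(w : Matrix (Fin 2) (Fin 2) ℝ)) :
    isoSphere u = isoSphere w := by
  rcases h with h | h
  · rw [Subtype.ext h]
  · have h10 : u 1 0 = -(w 1 0) := by
      have := congrFun (congrFun h 1) 0
      simpa using this
    have h11 : u 1 1 = -(w 1 1) := by
      have := congrFun (congrFun h 1) 1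
      simpa using this
    have key : ∀ z : ℂ, ‖(u 1 0 : ℂ) * z + (u 1 1 : ℂ)‖
        = ‖(w 1 0 : ℂ) * z + (w 1 1 : ℂ)‖ := by
      intro z
      rw [h10, h11]
      have : (((-(w 1 0) : ℝ)) : ℂ) * z + (((-(w 1 1) : ℝ)) : ℂ)
          = -((w 1 0 : ℂ) * z + (w 1 1 : ℂ)) := by push_cast; ring
      rw [this, norm_neg]
    unfold isoSphere
    ext z
    simp [key z]

end Moebius
/-! ### Ford step: multiplying enlarges the radius when the center is under the other sphere -/

section FordStep

lemma sq_le_imp (a b : ℝ) (hb : 0 ≤ b) (h : a^2 ≤ b^2) : a ≤ b := by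
  by_contra h'
  push_neg at h'
  nlinarith

lemma sq_lt_imp (a b : ℝ) (hb : 0 ≤ b) (h : a^2 < b^2) : a < b := by
  by_contra h'
  push_neg at h'
  nlinarith

lemma sq_eq_imp (a b : ℝ) (ha : 0 ≤ a) (hb : 0 ≤ b) (h : a^2 = b^2) : a = b :=
  le_antisymm (sq_le_imp a b hb h.le) (sq_le_imp b a ha h.ge)

lemma mul_inv_entry (v G : SL2R) (hv : v 1 0 ≠ 0) (hG : G 1 0 ≠ 0) :
    (v * G⁻¹) 1 0 = v 1 0 * G 1 0 * (cen v - cen G) := by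
  rw [mul_entry, inv_00, inv_10]
  unfold cen
  field_simp
  ring

lemma ford_zero (v G : SL2R) (hv : v 1 0 ≠ 0) (hG : G 1 0 ≠ 0) (heq : cen v = cen G) :
    (v * G⁻¹) 1 0 = 0 := by
  rw [mul_inv_entry v G hv hG, heq]; ring

lemma ford_step (v G : SL2R) (hv : v 1 0 ≠ 0) (hG : G 1 0 ≠ 0)
    (hne : cen v ≠ cen G) (hlt : |cen v - cen G| < rad G) :
    rad v < rad (v * G⁻¹) := by
  have hΔ : 0 < |cen v - cen G| := abs_pos.mpr (sub_ne_zero.mpr hne)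
  have hGpos : 0 < |G 1 0| := abs_pos.mpr hG
  have hvpos : 0 < |v 1 0| := abs_pos.mpr hv
  have hentry : |(v * G⁻¹) 1 0| = |v 1 0| * |G 1 0| * |cen v - cen G| := by
    rw [mul_inv_entry v G hv hG, abs_mul, abs_mul]
  unfold rad
  rw [hentry]
  rw [div_lt_div_iff₀ hvpos (by positivity)]
  have hkey : |G 1 0| * |cen v - cen G| < 1 := by
    have : |cen v - cen G| < 1 / |G 1 0| := hlt
    rw [lt_div_iff₀ hGpos] at this
    linarith [mul_comm |cen v - cen G| |G 1 0|]
  calc 1 * (|v 1 0| * |G 1 0| * |cen v - cen G|)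
      = |v 1 0| * (|G 1 0| * |cen v - cen G|) := by ring
    _ < |v 1 0| * 1 := by
        apply mul_lt_mul_of_pos_left hkey hvpos
    _ = 1 * |v 1 0| := by ring

end FordStep
/-! ### Main theorem -/

set_option maxHeartbeats 8000000 in
/-- either `Γ` is generated by `g` and `-1`, or there is a third
relevant isometric sphere whose summit lies on the boundary of the common
exterior, strictly between the summits of `I(g)` and `I(g⁻¹)`. -/
theorem third_relevant_sphere
    (Γ : Subgroup SL2R) (hdisc : IsDiscreteSubgroup Γ)
    (hne : ∃ g ∈ Γ, ¬ IsPMOne g)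
    (hstab : ∀ g ∈ Γ, g 1 0 = 0 → IsPMOne g)
    (hnopar : ∀ g ∈ Γ, (g 0 0 + g 1 1) ^ 2 = 4 → IsPMOne g)
    (hrad : ∃ R : ℝ, ∀ g ∈ Γ, ¬ IsPMOne g → 1 / |g 1 0| ≤ R)
    (hlf : ∀ z ∈ UH, ∃ U ∈ nhds z,
      {g : SL2R | g ∈ Γ ∧ ¬ IsPMOne g ∧ (isoInt g ∩ U).Nonempty}.Finite)
    (hfinrel : {S : Set ℂ | ∃ g ∈ Γ, ¬ IsPMOne g ∧ IsRelevant Γ g ∧ S = isoSphere g}.Finite)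
    (α β : ℝ)
    (hα : IsGreatest {a : ℝ | ∀ z ∈ frontier (commonExt Γ) ∩ UH, a ≤ z.re} α)
    (hβ : IsLeast {b : ℝ | ∀ z ∈ frontier (commonExt Γ) ∩ UH, z.re ≤ b} β)
    (g : SL2R) (hg : g ∈ Γ) (hgpm : ¬ IsPMOne g)
    (hrel : IsRelevant Γ g) (hrelinv : IsRelevant Γ g⁻¹)
    (hαend : α = -(g 1 1) / g 1 0 - 1 / |g 1 0|)
    (hβend : β = -((g⁻¹) 1 1) / (g⁻¹) 1 0 + 1 / |(g⁻¹) 1 0|) :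
    (∀ h ∈ Γ, ∃ n : ℤ,
        (h : Matrix (Fin 2) (Fin 2) ℝ) = ((g ^ n : SL2R) : Matrix (Fin 2) (Fin 2) ℝ) ∨
        (h : Matrix (Fin 2) (Fin 2) ℝ) = -((g ^ n : SL2R) : Matrix (Fin 2) (Fin 2) ℝ)) ∨
    (∃ h ∈ Γ, ¬ IsPMOne h ∧ IsRelevant Γ h ∧
        isoSphere h ≠ isoSphere g ∧ isoSphere h ≠ isoSphere g⁻¹ ∧
        summit h ∈ frontier (commonExt Γ) ∩ UH ∧
        (summit g).re < (summit h).re ∧ (summit h).re < (summit g⁻¹).re) := by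
  classical
  set P : SL2R → Prop := fun h => ∃ n : ℤ,
      (h : Matrix (Fin 2) (Fin 2) ℝ) = ((g ^ n : SL2R) : Matrix (Fin 2) (Fin 2) ℝ) ∨
      (h : Matrix (Fin 2) (Fin 2) ℝ) = -((g ^ n : SL2R) : Matrix (Fin 2) (Fin 2) ℝ) with hP
  by_cases hfirst : ∀ h ∈ Γ, P h
  · exact Or.inl hfirst
  right
  push_neg at hfirst
  obtain ⟨h₀, hh₀, hnp₀⟩ := hfirst
  obtain ⟨R, hradR⟩ := hrad
  have hα1 : ∀ z ∈ frontier (commonExt Γ) ∩ UH, α ≤ z.re := hα.1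
  have hβ1 : ∀ z ∈ frontier (commonExt Γ) ∩ UH, z.re ≤ β := hβ.1
  -- basic notations
  have hc : g 1 0 ≠ 0 := fun h0 => hgpm (hstab g hg h0)
  have hr1 : 0 < rad g := rad_pos g hc
  have hgipm : ¬ IsPMOne g⁻¹ := not_IsPMOne_inv g hgpm
  have hgi : g⁻¹ ∈ Γ := inv_mem hg
  have hci : (g⁻¹) 1 0 ≠ 0 := fun h0 => hgipm (hstab g⁻¹ hgi h0)
  have hri : rad g⁻¹ = rad g := rad_inv g
  have hαe : α = cen g - rad g := hαend
  have hβe : β = cen g⁻¹ + rad g := by rw [hβend, ← hri]; rfl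
  -- not a power implies not ±1
  have hnotpm_of_notP : ∀ h : SL2R, ¬ P h → ¬ IsPMOne h := by
    intro h hnp hpm
    apply hnp
    refine ⟨0, ?_⟩
    rcases hpm with h1 | h1
    · left; rw [h1, zpow_zero]; simp
    · right; rw [h1, zpow_zero]; simp
  -- P is stable under multiplying by powers of g on the right
  have hPmul : ∀ (w : SL2R) (m : ℤ), P w → P (w * g^m) := by
    rintro w m ⟨n, hn⟩
    refine ⟨n + m, ?_⟩
    have hco : ((w * g^m : SL2R) : Matrix (Fin 2) (Fin 2) ℝ)
        = (w : Matrix (Fin 2) (Fin 2) ℝ) * ((g^m : SL2R) : Matrix (Fin 2) (Fin 2) ℝ) := rfl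
    rcases hn with hn | hn
    · left
      rw [hco, hn, ← Matrix.SpecialLinearGroup.coe_mul, ← _root_.zpow_add]
    · right
      rw [hco, hn, Matrix.neg_mul, ← Matrix.SpecialLinearGroup.coe_mul, ← _root_.zpow_add]
  have hPstep : ∀ (w : SL2R) (m : ℤ), ¬ P w → ¬ P (w * g^m) := by
    intro w m hw hcon
    apply hw
    have := hPmul (w * g^m) (-m) hcon
    rwa [mul_assoc, ← _root_.zpow_add, add_neg_cancel, zpow_zero, mul_one] at this
  -- selection of a maximal-radius non-power
  have hnp₀' : ¬ P h₀ := hnp₀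
  have hpm₀ : ¬ IsPMOne h₀ := hnotpm_of_notP h₀ hnp₀'
  have hc₀ : h₀ 1 0 ≠ 0 := fun h0 => hpm₀ (hstab h₀ hh₀ h0)
  have hρ₀ : 0 < rad h₀ := rad_pos h₀ hc₀
  have hSfin := finite_large_radius Γ hdisc hstab R hradR α β hα1 hβ1 (rad h₀) hρ₀
  have hTfin : {h : SL2R | h ∈ Γ ∧ ¬ P h ∧ rad h₀ ≤ rad h}.Finite := by
    apply hSfin.subset
    rintro h ⟨hh, hnp, hρ⟩
    exact ⟨hh, hnotpm_of_notP h hnp, hρ⟩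
  have hT0 : h₀ ∈ hTfin.toFinset := by
    rw [Set.Finite.mem_toFinset]
    exact ⟨hh₀, hnp₀', le_refl _⟩
  obtain ⟨v, hvT, hvmax'⟩ := hTfin.toFinset.exists_max_image rad ⟨h₀, hT0⟩
  rw [Set.Finite.mem_toFinset] at hvT
  obtain ⟨hv, hvnp, hvρ⟩ := hvT
  have hvmax : ∀ u ∈ Γ, ¬ P u → rad u ≤ rad v := by
    intro u hu hup
    by_cases hle : rad u ≤ rad v
    · exact hle
    · push_neg at hle
      have : u ∈ hTfin.toFinset := by
        rw [Set.Finite.mem_toFinset]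
        exact ⟨hu, hup, le_trans hvρ hle.le⟩
      exact hvmax' u this
  have hvpm : ¬ IsPMOne v := hnotpm_of_notP v hvnp
  have hvc : v 1 0 ≠ 0 := fun h0 => hvpm (hstab v hv h0)
  have hrv : 0 < rad v := rad_pos v hvc
  have hvAB := interval_subset Γ hstab R hradR α β hα1 hβ1 v hv hvpm
  -- step 4: the center of v lies between the two spheres
  have hcl : cen g + rad g ≤ cen v := by
    by_contra hcon
    push_neg at hcon
    have hgt : cen g - rad g < cen v := by
      have := hvAB.1
      rw [hαe] at this
      linarith
    by_cases heq : cen v = cen g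
    · have h0 := ford_zero v g hvc hc heq
      have hmem : v * g⁻¹ ∈ Γ := mul_mem hv (inv_mem hg)
      have hpm1 : IsPMOne (v * g⁻¹) := hstab _ hmem h0
      have hnP : ¬ P (v * g⁻¹) := by
        have : v * g⁻¹ = v * g^(-1 : ℤ) := by rw [_root_.zpow_neg_one]
        rw [this]
        exact hPstep v (-1) hvnp
      exact (hnotpm_of_notP _ hnP) hpm1
    · have hΔ : |cen v - cen g| < rad g := abs_lt.mpr ⟨by linarith, by linarith⟩
      have hford := ford_step v g hvc hc heq hΔ
      have hmem : v * g⁻¹ ∈ Γ := mul_mem hv (inv_mem hg)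
      have hnP : ¬ P (v * g⁻¹) := by
        have : v * g⁻¹ = v * g^(-1 : ℤ) := by rw [_root_.zpow_neg_one]
        rw [this]
        exact hPstep v (-1) hvnp
      have := hvmax _ hmem hnP
      linarith
  have hcr : cen v ≤ cen g⁻¹ - rad g := by
    by_contra hcon
    push_neg at hcon
    have hlt2 : cen v < cen g⁻¹ + rad g := by
      have := hvAB.2
      rw [hβe] at this
      linarith
    by_cases heq : cen v = cen g⁻¹
    · have h0 := ford_zero v g⁻¹ hvc hci heq
      rw [inv_inv] at h0
      have hmem : v * g ∈ Γ := mul_mem hv hg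
      have hpm1 : IsPMOne (v * g) := hstab _ hmem h0
      have hnP : ¬ P (v * g) := by
        have : v * g = v * g^(1 : ℤ) := by rw [_root_.zpow_one]
        rw [this]
        exact hPstep v 1 hvnp
      exact (hnotpm_of_notP _ hnP) hpm1
    · have hΔ : |cen v - cen g⁻¹| < rad g⁻¹ := by
        rw [hri]
        exact abs_lt.mpr ⟨by linarith, by linarith⟩
      have hford := ford_step v g⁻¹ hvc hci heq hΔ
      rw [inv_inv] at hford
      have hmem : v * g ∈ Γ := mul_mem hv hg
      have hnP : ¬ P (v * g) := by
        have : v * g = v * g^(1 : ℤ) := by rw [_root_.zpow_one]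
        rw [this]
        exact hPstep v 1 hvnp
      have := hvmax _ hmem hnP
      linarith
  -- the two spheres of g and g⁻¹ are disjoint
  have hllr : cen g + rad g ≤ cen g⁻¹ - rad g := le_trans hcl hcr
  have hsub1 : isoInt g ⊆ isoExt g⁻¹ := by
    intro z hz
    rw [mem_isoInt g hc] at hz
    rw [mem_isoExt g⁻¹ hci]
    refine ⟨hz.1, ?_⟩
    have hre : (z - ((cen g : ℝ) : ℂ)).re = z.re - cen g := by simp
    have h1 : z.re - cen g < rad g := by
      have := Complex.abs_re_le_norm (z - ((cen g : ℝ) : ℂ))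
      rw [hre] at this
      have := le_abs_self (z.re - cen g)
      linarith [hz.2]
    have h2 : rad g⁻¹ < cen g⁻¹ - z.re := by
      rw [hri]; linarith
    have hre2 : (z - ((cen g⁻¹ : ℝ) : ℂ)).re = z.re - cen g⁻¹ := by simp
    calc rad g⁻¹ < cen g⁻¹ - z.re := h2
      _ ≤ |z.re - cen g⁻¹| := by rw [abs_sub_comm]; exact le_abs_self _
      _ = |(z - ((cen g⁻¹ : ℝ) : ℂ)).re| := by rw [hre2]
      _ ≤ ‖z - ((cen g⁻¹ : ℝ) : ℂ)‖ := Complex.abs_re_le_norm _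
  have hsub2 : isoInt g⁻¹ ⊆ isoExt (g⁻¹)⁻¹ := by
    rw [inv_inv]
    intro z hz
    rw [mem_isoInt g⁻¹ hci] at hz
    rw [mem_isoExt g hc]
    refine ⟨hz.1, ?_⟩
    have hre : (z - ((cen g⁻¹ : ℝ) : ℂ)).re = z.re - cen g⁻¹ := by simp
    have h1 : cen g⁻¹ - z.re < rad g := by
      have habs := Complex.abs_re_le_norm (z - ((cen g⁻¹ : ℝ) : ℂ))
      rw [hre] at habs
      have h3 := neg_abs_le (z.re - cen g⁻¹)
      have h4 : ‖z - ((cen g⁻¹ : ℝ) : ℂ)‖ < rad g := by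
        rw [← hri]; exact hz.2
      linarith
    have hre2 : (z - ((cen g : ℝ) : ℂ)).re = z.re - cen g := by simp
    calc rad g < z.re - cen g := by linarith
      _ ≤ |z.re - cen g| := le_abs_self _
      _ = |(z - ((cen g : ℝ) : ℂ)).re| := by rw [hre2]
      _ ≤ ‖z - ((cen g : ℝ) : ℂ)‖ := Complex.abs_re_le_norm _
  -- interiors of spheres of powers of g lie under the spheres of g and g⁻¹
  have hpowsub : ∀ u : SL2R, ¬ IsPMOne u → P u → isoInt u ⊆ isoInt g ∪ isoInt g⁻¹ := by
    rintro u hupm ⟨n, hn⟩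
    have hn0 : n ≠ 0 := by
      rintro rfl
      rw [zpow_zero] at hn
      apply hupm
      rcases hn with hn | hn
      · left; rw [hn]; simp
      · right; rw [hn]; simp
    have hcongr : isoInt u = isoInt (g ^ n) := isoInt_congr_pm u (g ^ n) hn
    rw [hcongr]
    rcases lt_or_gt_of_ne hn0 with hneg | hpos
    · -- negative power
      have h1 : (g⁻¹) ^ ((-n).toNat) = g ^ n := by
        have h2 : ((-n).toNat : ℤ) = -n := Int.toNat_of_nonneg (by linarith)
        calc (g⁻¹) ^ ((-n).toNat) = (g⁻¹) ^ (((-n).toNat : ℤ)) := by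
              rw [zpow_natCast]
          _ = (g⁻¹) ^ (-n) := by rw [h2]
          _ = g ^ n := by rw [_root_.inv_zpow, ← _root_.zpow_neg, neg_neg]
      rw [← h1]
      intro z hz
      exact Or.inr (pow_isoInt_subset g⁻¹ hsub2 ((-n).toNat) hz)
    · have h1 : g ^ (n.toNat) = g ^ n := by
        have h2 : ((n).toNat : ℤ) = n := Int.toNat_of_nonneg (by linarith)
        calc g ^ n.toNat = g ^ ((n.toNat : ℤ)) := (zpow_natCast g n.toNat).symm
          _ = g ^ n := by rw [h2]
      rw [← h1]
      intro z hz
      exact Or.inl (pow_isoInt_subset g hsub1 (n.toNat) hz)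
  -- the summit of v is outside or on every sphere
  set sv := summit v with hsv
  have hsvim : sv.im = rad v := summit_im v
  have hsvre : sv.re = cen v := summit_re v
  have hsvim_pos : 0 < sv.im := by rw [hsvim]; exact hrv
  have hsubim : ∀ x : ℝ, (sv - (x : ℂ)).im = rad v := by
    intro x; rw [Complex.sub_im, hsvim]; simp
  have hsubre : ∀ x : ℝ, (sv - (x : ℂ)).re = cen v - x := by
    intro x; rw [Complex.sub_re, hsvre]; simp
  have habs_ge : ∀ x : ℝ, rad v ≤ ‖sv - (x : ℂ)‖ := by
    intro x
    have := Complex.abs_im_le_norm (sv - (x : ℂ))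
    rw [hsubim x] at this
    have h2 := le_abs_self (rad v)
    linarith
  have habs_sq : ∀ x : ℝ, (‖sv - (x : ℂ)‖)^2 = (cen v - x)^2 + (rad v)^2 := by
    intro x
    rw [absq, hsubre, hsubim]
  have hout : ∀ u ∈ Γ, ¬ IsPMOne u → rad u ≤ ‖sv - ((cen u : ℝ) : ℂ)‖ := by
    intro u hu hupm
    by_contra hcon
    push_neg at hcon
    have hcu : u 1 0 ≠ 0 := fun h0 => hupm (hstab u hu h0)
    by_cases hPu : P u
    · have hmem : sv ∈ isoInt u := by
        rw [mem_isoInt u hcu]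
        exact ⟨hsvim_pos, hcon⟩
      have := hpowsub u hupm hPu hmem
      rcases this with hmm | hmm
      · rw [mem_isoInt g hc] at hmm
        have h1 : cen v - cen g ≤ |cen v - cen g| := le_abs_self _
        have h2 : |cen v - cen g| ≤ |(sv - ((cen g : ℝ):ℂ)).re| := by rw [hsubre]
        have h3 := Complex.abs_re_le_norm (sv - ((cen g : ℝ):ℂ))
        have h4 : rad g ≤ cen v - cen g := by linarith
        linarith [hmm.2]
      · rw [mem_isoInt g⁻¹ hci] at hmm
        have h1 : cen g⁻¹ - cen v ≤ |cen v - cen g⁻¹| := by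
          rw [abs_sub_comm]; exact le_abs_self _
        have h2 : |cen v - cen g⁻¹| ≤ |(sv - ((cen g⁻¹ : ℝ):ℂ)).re| := by rw [hsubre]
        have h3 := Complex.abs_re_le_norm (sv - ((cen g⁻¹ : ℝ):ℂ))
        have h4 : rad g ≤ cen g⁻¹ - cen v := by linarith
        rw [hri] at hmm
        linarith [hmm.2]
    · have h1 := hvmax u hu hPu
      have h2 := habs_ge (cen u)
      linarith
  -- the summit of v is on the frontier
  have hclos : sv ∈ closure (commonExt Γ) :=
    mem_closure_commonExt Γ hstab sv hsvim_pos hout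
  have habs_cen : ‖sv - ((cen v : ℝ) : ℂ)‖ = rad v := by
    have h1 := habs_sq (cen v)
    have h2 : (cen v - cen v)^2 = 0 := by simp
    apply sq_eq_imp _ _ (norm_nonneg _) hrv.le
    rw [h1]
    nlinarith
  have hnotK : sv ∉ commonExt Γ := by
    intro hmem
    have := (mem_commonExt Γ sv).mp hmem v hv hvpm
    rw [mem_isoExt v hvc] at this
    rw [habs_cen] at this
    exact lt_irrefl _ this.2
  have hfront : sv ∈ frontier (commonExt Γ) := mem_frontier_of _ _ hclos hnotK
  have hsvUH : sv ∈ UH := hsvim_pos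
  -- dichotomy: every sphere either coincides with that of v or avoids a neighborhood of sv
  have hdich : ∀ u ∈ Γ, ¬ IsPMOne u →
      ((cen u = cen v ∧ rad u = rad v) ∨ rad u < ‖sv - ((cen u : ℝ) : ℂ)‖) := by
    intro u hu hupm
    have hcu : u 1 0 ≠ 0 := fun h0 => hupm (hstab u hu h0)
    have hru0 : 0 < rad u := rad_pos u hcu
    rcases lt_or_eq_of_le (hout u hu hupm) with hlt | heq
    · exact Or.inr hlt
    · by_cases hcc : cen u = cen v
      · left
        exact ⟨hcc, by rw [heq, hcc, habs_cen]⟩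
      · exfalso
        have hΔne : cen v - cen u ≠ 0 := sub_ne_zero.mpr (Ne.symm hcc)
        have hΔ2 : 0 < (cen v - cen u)^2 := by
          have := abs_pos.mpr hΔne
          nlinarith [_root_.sq_abs (cen v - cen u)]
        have hsq : (rad u)^2 = (cen v - cen u)^2 + (rad v)^2 := by
          rw [heq]; exact habs_sq (cen u)
        have hru : rad v < rad u := by
          apply sq_lt_imp _ _ hru0.le
          linarith
        have hPu : P u := by
          by_contra hnPu
          have := hvmax u hu hnPu
          linarith
        -- the summit of v is strictly outside both spheres of g, g⁻¹
        have habs1 : rad g < ‖sv - ((cen g : ℝ) : ℂ)‖ := by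
          apply sq_lt_imp _ _ (norm_nonneg _)
          rw [habs_sq (cen g)]
          have h3 : rad g ≤ cen v - cen g := by linarith [hcl]
          nlinarith
        have habs2 : rad g < ‖sv - ((cen g⁻¹ : ℝ) : ℂ)‖ := by
          apply sq_lt_imp _ _ (norm_nonneg _)
          rw [habs_sq (cen g⁻¹)]
          have h3 : rad g ≤ cen g⁻¹ - cen v := by linarith [hcr]
          nlinarith
        set γ := min (‖sv - ((cen g : ℝ) : ℂ)‖ - rad g)
                    (‖sv - ((cen g⁻¹ : ℝ) : ℂ)‖ - rad g) with hγ
        have hγpos : 0 < γ := lt_min (by linarith) (by linarith)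
        set t := 1 - min (γ/(2*rad u)) (1/2) with ht
        have hmin_pos : 0 < min (γ/(2*rad u)) (1/2) := lt_min (by positivity) (by norm_num)
        have hmin_le : min (γ/(2*rad u)) (1/2) ≤ 1/2 := min_le_right _ _
        have ht1 : t < 1 := by simp only [ht]; linarith
        have ht0 : 0 < t := by simp only [ht]; linarith
        have h1t : (1-t) * rad u ≤ γ/2 := by
          have h2 : 1 - t ≤ γ/(2*rad u) := by
            have := min_le_left (γ/(2*rad u)) (1/2 : ℝ)
            simp only [ht]
            linarith
          have h3 : (1-t) * rad u ≤ (γ/(2*rad u)) * rad u :=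
            mul_le_mul_of_nonneg_right h2 hru0.le
          have h4 : (γ/(2*rad u)) * rad u = γ/2 := by field_simp
          linarith
        set w := ((cen u : ℝ) : ℂ) + ((t : ℝ) : ℂ) * (sv - ((cen u : ℝ) : ℂ)) with hw
        have hwsub : w - ((cen u : ℝ) : ℂ) = ((t : ℝ) : ℂ) * (sv - ((cen u : ℝ) : ℂ)) := by
          rw [hw]; ring
        have hwim : w.im = t * rad v := by
          rw [hw]
          simp only [Complex.add_im, Complex.ofReal_im, Complex.mul_im,
            Complex.ofReal_re, hsubim (cen u)]
          ring
        have hwmem : w ∈ isoInt u := by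
          rw [mem_isoInt u hcu]
          constructor
          · rw [hwim]; positivity
          · rw [hwsub, norm_mul, Complex.norm_real, Real.norm_eq_abs, ← heq,
              abs_of_pos ht0]
            nlinarith
        have hsvw : sv - w = ((1-t : ℝ) : ℂ) * (sv - ((cen u : ℝ) : ℂ)) := by
          rw [hw]; push_cast; ring
        have habs_svw : ‖sv - w‖ = (1-t) * rad u := by
          rw [hsvw, norm_mul, Complex.norm_real, Real.norm_eq_abs, ← heq,
            abs_of_pos (by linarith : (0:ℝ) < 1 - t)]
        have hS : ‖sv - w‖ ≤ γ/2 := by rw [habs_svw]; exact h1t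
        rcases hpowsub u hupm hPu hwmem with hmm | hmm
        · rw [mem_isoInt g hc] at hmm
          have htri := norm_sub_le_norm_sub_add_norm_sub sv w ((cen g : ℝ) : ℂ)
          have hγ1 : γ ≤ ‖sv - ((cen g : ℝ) : ℂ)‖ - rad g := min_le_left _ _
          have hB2 := hmm.2
          have hchain : ‖sv - ((cen g : ℝ) : ℂ)‖ < γ/2 + rad g := by linarith
          linarith
        · rw [mem_isoInt g⁻¹ hci] at hmm
          have htri := norm_sub_le_norm_sub_add_norm_sub sv w ((cen g⁻¹ : ℝ) : ℂ)
          have hγ2 : γ ≤ ‖sv - ((cen g⁻¹ : ℝ) : ℂ)‖ - rad g := min_le_right _ _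
          rw [hri] at hmm
          have hB2 := hmm.2
          have hchain : ‖sv - ((cen g⁻¹ : ℝ) : ℂ)‖ < γ/2 + rad g := by linarith
          linarith
  -- local finiteness at sv
  obtain ⟨U, hU, hBfin⟩ := hlf sv hsvUH
  obtain ⟨ε₀, hε₀, hball⟩ := Metric.mem_nhds_iff.mp hU
  obtain ⟨D1, hD1pos, hD1le⟩ : ∃ D1 : ℝ, 0 < D1 ∧ ∀ u ∈ hBfin.toFinset,
      rad u < ‖sv - ((cen u : ℝ) : ℂ)‖ →
      D1 ≤ ‖sv - ((cen u : ℝ) : ℂ)‖ - rad u := by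
    set f : SL2R → ℝ := fun u => ‖sv - ((cen u : ℝ) : ℂ)‖ - rad u with hf
    set B0 := hBfin.toFinset.filter (fun u => rad u < ‖sv - ((cen u : ℝ) : ℂ)‖) with hB0
    set Fq := B0.image f with hFq
    refine ⟨(insert (1:ℝ) Fq).min' (Finset.insert_nonempty _ _), ?_, ?_⟩
    · have hmem := Finset.min'_mem (insert (1:ℝ) Fq) (Finset.insert_nonempty _ _)
      rcases Finset.mem_insert.mp hmem with h1 | h1
      · rw [h1]; exact one_pos
      · obtain ⟨u, hu1, hu2⟩ := Finset.mem_image.mp h1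
        have hu3 := (Finset.mem_filter.mp hu1).2
        rw [← hu2]
        simp only [hf]
        linarith
    · intro u hu hlt
      apply Finset.min'_le
      apply Finset.mem_insert_of_mem
      apply Finset.mem_image_of_mem
      rw [hB0, Finset.mem_filter]
      exact ⟨hu, hlt⟩
  obtain ⟨δ, hδpos, hδε₀, hδD1⟩ : ∃ δ : ℝ, 0 < δ ∧ δ ≤ ε₀ ∧ δ ≤ D1 :=
    ⟨min ε₀ D1, lt_min hε₀ hD1pos, min_le_left _ _, min_le_right _ _⟩
  -- the second point on the sphere of v
  obtain ⟨x, y, hx0, hxδ, hy0, hy1, hxy2, h1yx⟩ :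
      ∃ x y : ℝ, 0 < x ∧ x ≤ δ/(4*rad v) ∧ 0 < y ∧ y ≤ 1 ∧ x^2 + y^2 = 1 ∧ 1 - y ≤ x^2 := by
    set x := min (1/2 : ℝ) (δ/(4*rad v)) with hx
    have hx0 : 0 < x := lt_min (by norm_num) (by positivity)
    have hx12 : x ≤ 1/2 := min_le_left _ _
    have hxδ : x ≤ δ/(4*rad v) := min_le_right _ _
    have h1x2 : 0 < 1 - x^2 := by nlinarith
    have hy0 : 0 < Real.sqrt (1 - x^2) := Real.sqrt_pos.mpr h1x2
    have hy2 : (Real.sqrt (1 - x^2))^2 = 1 - x^2 := Real.sq_sqrt h1x2.le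
    have hy1 : Real.sqrt (1 - x^2) ≤ 1 := by nlinarith
    exact ⟨x, Real.sqrt (1 - x^2), hx0, hxδ, hy0, hy1, by linarith, by nlinarith⟩
  set A := ((x : ℝ) : ℂ) + ((y : ℝ) : ℂ) * Complex.I with hA
  have hAre : A.re = x := by simp [hA]
  have hAim : A.im = y := by simp [hA]
  have habsA : ‖A‖ = 1 := by
    apply sq_eq_imp _ _ (norm_nonneg _) zero_le_one
    rw [absq, hAre, hAim]
    nlinarith
  set z₂ := ((cen v : ℝ) : ℂ) + ((rad v : ℝ) : ℂ) * A with hz₂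
  have hz₂cen : z₂ - ((cen v : ℝ) : ℂ) = ((rad v : ℝ) : ℂ) * A := by rw [hz₂]; ring
  have habs_z₂cen : ‖z₂ - ((cen v : ℝ) : ℂ)‖ = rad v := by
    rw [hz₂cen, norm_mul, Complex.norm_real, Real.norm_eq_abs, habsA, abs_of_pos hrv]
    ring
  have him_z₂ : z₂.im = rad v * y := by
    rw [hz₂]
    simp only [Complex.add_im, Complex.ofReal_im, Complex.mul_im, Complex.ofReal_re, hAim, hAre]
    ring
  have him_z₂pos : 0 < z₂.im := by rw [him_z₂]; positivity
  have hz₂sv : z₂ - sv = ((rad v : ℝ) : ℂ) * (((x : ℝ) : ℂ) + ((y - 1 : ℝ) : ℂ) * Complex.I) := by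
    rw [hz₂, hsv, summit_eq v, hA]
    push_cast
    ring
  have habsB : ‖((x : ℝ) : ℂ) + ((y - 1 : ℝ) : ℂ) * Complex.I‖ ≤ 2*x := by
    apply sq_le_imp _ _ (by positivity)
    have hBre : (((x : ℝ) : ℂ) + ((y - 1 : ℝ) : ℂ) * Complex.I).re = x := by simp
    have hBim : (((x : ℝ) : ℂ) + ((y - 1 : ℝ) : ℂ) * Complex.I).im = y - 1 := by simp
    rw [absq, hBre, hBim]
    have h1y : 1 - y ≤ x^2 := h1yx
    nlinarith
  have habs_z₂sv : ‖z₂ - sv‖ ≤ δ/2 := by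
    rw [hz₂sv, norm_mul, Complex.norm_real, Real.norm_eq_abs, abs_of_pos hrv]
    have h1 : rad v * ‖((x : ℝ) : ℂ) + ((y - 1 : ℝ) : ℂ) * Complex.I‖ ≤ rad v * (2*x) :=
      mul_le_mul_of_nonneg_left habsB hrv.le
    have h2 : rad v * (2*x) ≤ rad v * (2*(δ/(4*rad v))) := by
      apply mul_le_mul_of_nonneg_left _ hrv.le
      linarith
    have h3 : rad v * (2*(δ/(4*rad v))) = δ/2 := by
      field_simp
      ring
    linarith
  have hz₂U : z₂ ∈ U := by
    apply hball
    rw [Metric.mem_ball, Complex.dist_eq]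
    calc ‖z₂ - sv‖ ≤ δ/2 := habs_z₂sv
      _ < δ := by linarith
      _ ≤ ε₀ := hδε₀
  have hre_z₂ : z₂.re = cen v + rad v * x := by
    rw [hz₂]
    simp only [Complex.add_re, Complex.ofReal_re, Complex.mul_re, Complex.ofReal_im, hAre, hAim]
    ring
  have hz₂ne : sv ≠ z₂ := by
    intro heq
    have h1 : sv.re = z₂.re := by rw [heq]
    rw [hsvre, hre_z₂] at h1
    have := mul_pos hrv hx0
    linarith
  have hz₂out : ∀ u ∈ Γ, ¬ IsPMOne u → rad u ≤ ‖z₂ - ((cen u : ℝ) : ℂ)‖ := by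
    intro u hu hupm
    have hcu : u 1 0 ≠ 0 := fun h0 => hupm (hstab u hu h0)
    by_cases hB : (isoInt u ∩ U).Nonempty
    · have huB : u ∈ hBfin.toFinset := by
        rw [Set.Finite.mem_toFinset]
        exact ⟨hu, hupm, hB⟩
      rcases hdich u hu hupm with ⟨hceq, hreq⟩ | hlt
      · rw [hceq, habs_z₂cen, hreq]
      · have h1 : D1 ≤ ‖sv - ((cen u : ℝ) : ℂ)‖ - rad u := hD1le u huB hlt
        have htri := norm_sub_le_norm_sub_add_norm_sub sv z₂ ((cen u : ℝ) : ℂ)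
        have hcomm : ‖sv - z₂‖ = ‖z₂ - sv‖ := by
          rw [← neg_sub, norm_neg]
        rw [hcomm] at htri
        linarith [habs_z₂sv]
    · by_contra hcon2
      push_neg at hcon2
      have : z₂ ∈ isoInt u := (mem_isoInt u hcu z₂).mpr ⟨him_z₂pos, hcon2⟩
      exact hB ⟨z₂, this, hz₂U⟩
  have hz₂clos : z₂ ∈ closure (commonExt Γ) :=
    mem_closure_commonExt Γ hstab z₂ him_z₂pos hz₂out
  have hz₂notK : z₂ ∉ commonExt Γ := by
    intro hmem
    have := (mem_commonExt Γ z₂).mp hmem v hv hvpm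
    rw [mem_isoExt v hvc] at this
    rw [habs_z₂cen] at this
    exact lt_irrefl _ this.2
  have hz₂front : z₂ ∈ frontier (commonExt Γ) := mem_frontier_of _ _ hz₂clos hz₂notK
  have hz₂UH : z₂ ∈ UH := him_z₂pos
  have hz₂sph : z₂ ∈ isoSphere v := (mem_isoSphere v hvc z₂).mpr ⟨him_z₂pos, habs_z₂cen⟩
  have hsvsph : sv ∈ isoSphere v := (mem_isoSphere v hvc sv).mpr ⟨hsvim_pos, habs_cen⟩
  -- conclusion
  refine ⟨v, hv, hvpm, ?_, ?_, ?_, ⟨hfront, hsvUH⟩, ?_, ?_⟩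
  · exact ⟨sv, ⟨hsvsph, hfront, hsvUH⟩, z₂, ⟨hz₂sph, hz₂front, hz₂UH⟩, hz₂ne⟩
  · intro heq
    have h1 : sv ∈ isoSphere g := heq ▸ hsvsph
    rw [mem_isoSphere g hc] at h1
    have h2 := habs_sq (cen g)
    have h3 : rad g ≤ cen v - cen g := by linarith [hcl]
    nlinarith [h1.2]
  · intro heq
    have h1 : sv ∈ isoSphere g⁻¹ := heq ▸ hsvsph
    rw [mem_isoSphere g⁻¹ hci] at h1
    have h2 := habs_sq (cen g⁻¹)
    have h3 : rad g ≤ cen g⁻¹ - cen v := by linarith [hcr]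
    rw [hri] at h1
    nlinarith [h1.2]
  · rw [summit_re, summit_re]
    linarith [hcl, hr1]
  · rw [summit_re, summit_re]
    linarith [hcr, hr1]
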